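/- Let N, n, k be non-negative integers. The number of partitions of n into exactly k parts, all of which are odd and at most 2N−2k+1, equals the number of partitions of n into distinct parts ≤ N whose alternating sum λ₁ − λ₂ + λ₃ − λ₄ + … equals k. -/

import Mathlib

def IsDistinctPartition (π : List ℕ) : Prop :=
  π.Chain' (· > ·) ∧ ∀ p ∈ π, 0 < p

def IsPartition (π : List ℕ) : Prop :=
  π.Chain' (· ≥ ·) ∧ ∀ p ∈ π, 0 < p

def oddIdxOdd (π : List ℕ) : ℕ :=
  (π.zipIdx.map Prod.swap |>.filter fun p => p.1 % 2 == 0 && p.2 % 2 == 1).length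

def evenIdxOdd (π : List ℕ) : ℕ :=
  (π.zipIdx.map Prod.swap |>.filter fun p => p.1 % 2 == 1 && p.2 % 2 == 1).length

def bgRank (π : List ℕ) : ℤ := (oddIdxOdd π : ℤ) - evenIdxOdd π

def altSum : List ℕ → ℤ
  | [] => 0
  | a :: t => (a : ℤ) - altSum t

noncomputable def gaussPoly : ℕ → ℕ → Polynomial ℚ
  | _, 0 => 1
  | 0, _ + 1 => 0
  | m + 1, r + 1 => gaussPoly m r + Polynomial.X ^ (r + 1) * gaussPoly m (r + 1)

noncomputable def gaussZ (m : ℕ) (r : ℤ) : Polynomial ℚ :=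
  if 0 ≤ r then gaussPoly m r.toNat else 0


open Polynomial

noncomputable def gp : ℕ → ℕ → Polynomial ℕ
  | _, 0 => 1
  | 0, _ + 1 => 0
  | m + 1, r + 1 => gp m r + gp m (r + 1) * Polynomial.X ^ (r + 1)

lemma gp_zero (m : ℕ) : gp m 0 = 1 := by cases m <;> rfl

lemma gp_succ (m r : ℕ) : gp (m+1) (r+1) = gp m r + gp m (r+1) * X ^ (r+1) := rfl

lemma gp_vanish : ∀ m r : ℕ, m < r → gp m r = 0 := by
  intro m
  induction m with
  | zero => intro r h; match r, h with | r+1, _ => rfl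
  | succ m ih =>
    intro r h
    match r, h with
    | r+1, h => rw [gp_succ, ih r (by omega), ih (r+1) (by omega)]; ring

lemma gp_self : ∀ m : ℕ, gp m m = 1 := by
  intro m
  induction m with
  | zero => rfl
  | succ m ih => rw [gp_succ, ih, gp_vanish m (m+1) (by omega)]; ring

lemma gp_one_aux : ∀ m : ℕ, gp (m+1) 1 = X ^ m + gp m 1 := by
  intro m
  induction m with
  | zero =>
    rw [gp_succ, gp_zero, gp_vanish 0 1 (by omega)]; simp
  | succ m ih =>
    have hdef : gp (m+1) 1 = 1 + gp m 1 * X := by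
      rw [gp_succ, gp_zero, pow_one]; all_goals ring
    calc gp (m+2) 1 = 1 + gp (m+1) 1 * X := by rw [gp_succ, gp_zero, pow_one]
      _ = 1 + (X ^ m + gp m 1) * X := by rw [ih]
      _ = X ^ (m+1) + (1 + gp m 1 * X) := by ring
      _ = X ^ (m+1) + gp (m+1) 1 := by rw [← hdef]

lemma gp_pascal2 : ∀ m r : ℕ, r ≤ m →
    gp (m+1) (r+1) = gp m r * X ^ (m - r) + gp m (r+1) := by
  intro m
  induction m with
  | zero =>
    intro r h; interval_cases r
    rw [gp_succ, gp_zero, gp_vanish 0 1 (by omega)]; simp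
  | succ m ih =>
    intro r h
    match r with
    | 0 =>
      rw [gp_one_aux (m+1), gp_zero]
      simp only [Nat.sub_zero, one_mul, pow_succ]
      all_goals ring
    | r'+1 =>
      rcases Nat.lt_or_ge (r'+1) (m+1) with hr | hr
      · have A1 : gp (m+1) (r'+1) = gp m r' * X ^ (m - r') + gp m (r'+1) := ih r' (by omega)
        have A2 : gp (m+1) (r'+1+1) = gp m (r'+1) * X ^ (m - (r'+1)) + gp m (r'+1+1) :=
          ih (r'+1) (by omega)
        have B1 : gp (m+1+1) (r'+1+1) = gp (m+1) (r'+1) + gp (m+1) (r'+1+1) * X ^ (r'+1+1) :=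
          gp_succ (m+1) (r'+1)
        have B2 : gp (m+1) (r'+1+1) = gp m (r'+1) + gp m (r'+1+1) * X ^ (r'+1+1) :=
          gp_succ m (r'+1)
        have B3 : gp (m+1) (r'+1) = gp m r' + gp m (r'+1) * X ^ (r'+1) := gp_succ m r'
        have e1 : m + 1 - (r'+1) = m - r' := by omega
        have e4 : (X : Polynomial ℕ) ^ (m - (r'+1)) * X ^ (r'+1+1) = X ^ (m+1) := by
          rw [← pow_add]; congr 1; omega
        have e5 : (X : Polynomial ℕ) ^ (r'+1) * X ^ (m - r') = X ^ (m+1) := by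
          rw [← pow_add]; congr 1; omega
        calc gp (m+1+1) (r'+1+1)
            = (gp m r' * X ^ (m-r') + gp m (r'+1)) +
              (gp m (r'+1) * X ^ (m-(r'+1)) + gp m (r'+1+1)) * X ^ (r'+1+1) := by
              rw [B1, A1, A2]
          _ = gp m r' * X ^ (m-r') + gp m (r'+1) +
              gp m (r'+1) * (X ^ (m-(r'+1)) * X ^ (r'+1+1)) +
              gp m (r'+1+1) * X ^ (r'+1+1) := by ring
          _ = gp m r' * X ^ (m-r') + gp m (r'+1) + gp m (r'+1) * X ^ (m+1) +
              gp m (r'+1+1) * X ^ (r'+1+1) := by rw [e4]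
          _ = (gp m r' + gp m (r'+1) * X ^ (r'+1)) * X ^ (m - r') +
              (gp m (r'+1) + gp m (r'+1+1) * X ^ (r'+1+1)) := by
              rw [add_mul, mul_assoc, e5]; ring
          _ = gp (m+1) (r'+1) * X ^ (m + 1 - (r'+1)) + gp (m+1) (r'+1+1) := by
              rw [e1, ← B3, ← B2]
      · have hrm : r' = m := by omega
        subst hrm
        rw [gp_self, gp_self, gp_vanish (r'+1) (r'+1+1) (by omega), Nat.sub_self]
        simp
  termination_by m => m

lemma gp_symm : ∀ m r : ℕ, r ≤ m → gp m r = gp m (m - r) := by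
  intro m
  induction m with
  | zero => intro r h; interval_cases r; rfl
  | succ m ih =>
    intro r h
    match r with
    | 0 => rw [gp_zero, Nat.sub_zero, gp_self]
    | r'+1 =>
      rcases Nat.lt_or_ge (r'+1) (m+1) with hr | hr
      · have e : m + 1 - (r'+1) = (m - r' - 1) + 1 := by omega
        have g2 : m - (m - r' - 1) = r' + 1 := by omega
        have I1 : gp m (m - r' - 1) = gp m (r'+1) := by rw [ih (m-r'-1) (by omega), g2]
        have I2 : gp m r' = gp m (m - r') := ih r' (by omega)
        have e3 : m - r' - 1 + 1 = m - r' := by omega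
        rw [e, gp_pascal2 m (m-r'-1) (by omega), g2, I1, e3, ← I2, gp_succ]
        ring
      · have hrm : r' = m := by omega
        subst hrm
        rw [Nat.sub_self, gp_self, gp_zero]

noncomputable def cf (m r s : ℕ) : ℕ := (gp m r).coeff s

lemma cf_zero (m s : ℕ) : cf m 0 s = if s = 0 then 1 else 0 := by
  rw [cf, gp_zero]
  simp [Polynomial.coeff_one]
  all_goals (try split_ifs) <;> first | rfl | omega | simp_all

lemma cf_vanish (m r s : ℕ) (h : m < r) : cf m r s = 0 := by
  rw [cf, gp_vanish m r h, coeff_zero]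

lemma cf_succ (m r s : ℕ) :
    cf (m+1) (r+1) s = cf m r s + if r + 1 ≤ s then cf m (r+1) (s - (r+1)) else 0 := by
  rw [cf, gp_succ, coeff_add, coeff_mul_X_pow']
  rfl

lemma cf_pascal2 (m r s : ℕ) (h : r ≤ m) :
    cf (m+1) (r+1) s = (if m - r ≤ s then cf m r (s - (m - r)) else 0) + cf m (r+1) s := by
  rw [cf, gp_pascal2 m r h, coeff_add, coeff_mul_X_pow']
  rfl

lemma cf_symm (m r s : ℕ) (h : r ≤ m) : cf m r s = cf m (m - r) s := by
  rw [cf, cf, gp_symm m r h]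

lemma cf_self (m s : ℕ) : cf m m s = if s = 0 then 1 else 0 := by
  rw [cf, gp_self]
  simp [Polynomial.coeff_one]
  all_goals (try split_ifs) <;> first | rfl | omega | simp_all


-- ### list helpers

lemma altSum_nil : altSum [] = 0 := rfl
lemma altSum_cons (a : ℕ) (t : List ℕ) : altSum (a :: t) = (a : ℤ) - altSum t := rfl

lemma headI_mem {l : List ℕ} (h : l ≠ []) : l.headI ∈ l := by
  cases l with
  | nil => exact absurd rfl h
  | cons a t => exact List.mem_cons_self

lemma mem_le_headI {l : List ℕ} (h : l.Pairwise (· ≥ ·)) {p : ℕ} (hp : p ∈ l) :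
    p ≤ l.headI := by
  cases l with
  | nil => simp at hp
  | cons a t =>
    rcases List.mem_cons.mp hp with rfl | hp'
    · exact le_refl _
    · exact (List.pairwise_cons.mp h).1 p hp'

lemma length_le_sum : ∀ l : List ℕ, (∀ p ∈ l, 0 < p) → l.length ≤ l.sum := by
  intro l
  induction l with
  | nil => simp
  | cons a t ih =>
    intro h
    simp only [List.length_cons, List.sum_cons]
    have h1 := ih (fun p hp => h p (List.mem_cons_of_mem a hp))
    have h2 := h a (List.mem_cons_self)
    omega

lemma odd_sum : ∀ l : List ℕ, (∀ p ∈ l, p % 2 = 1) → l.sum % 2 = l.length % 2 := by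
  intro l
  induction l with
  | nil => simp
  | cons a t ih =>
    intro h
    simp only [List.length_cons, List.sum_cons]
    have h1 := ih (fun p hp => h p (List.mem_cons_of_mem a hp))
    have h2 := h a (List.mem_cons_self)
    omega

lemma altSum_abs_le : ∀ l : List ℕ, altSum l ≤ (l.sum : ℤ) ∧ -(l.sum : ℤ) ≤ altSum l := by
  intro l
  induction l with
  | nil => simp [altSum_nil]
  | cons a t ih =>
    rw [altSum_cons]
    simp only [List.sum_cons, Nat.cast_add]
    omega

lemma altSum_parity : ∀ l : List ℕ, (2:ℤ) ∣ ((l.sum : ℤ) + altSum l) := by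
  intro l
  induction l with
  | nil => simp [altSum_nil]
  | cons a t ih =>
    rw [altSum_cons]
    simp only [List.sum_cons, Nat.cast_add]
    omega

lemma altSum_nonneg_le_head : ∀ l : List ℕ, l.Pairwise (· > ·) →
    0 ≤ altSum l ∧ altSum l ≤ (l.headI : ℤ) := by
  intro l
  induction l with
  | nil => simp [altSum_nil]
  | cons a t ih =>
    intro h
    have ih' := ih (h.of_cons)
    rw [altSum_cons]
    simp only [List.headI_cons]
    cases t with
    | nil => simp [altSum_nil]
    | cons b t' =>
      have hab : a > b := (List.pairwise_cons.mp h).1 b (List.mem_cons_self)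
      simp only [List.headI_cons] at ih'
      omega

-- ### finiteness

lemma finite_of_sum {n : ℕ} {P : List ℕ → Prop}
    (h : ∀ l, P l → (∀ p ∈ l, 0 < p) ∧ l.sum = n) : Finite {l : List ℕ // P l} := by
  have big : {l : List ℕ | l.length ≤ n ∧ ∀ x ∈ l, x ≤ n}.Finite := by
    have h1 : {l : List (Fin (n+1)) | l.length ≤ n}.Finite := List.finite_length_le _ n
    apply (h1.image (List.map Fin.val)).subset
    rintro l ⟨hl, hb⟩
    refine ⟨l.pmap (fun x hx => (⟨x, hx⟩ : Fin (n+1)))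
      (fun x hx => Nat.lt_succ_of_le (hb x hx)), by simpa using hl, ?_⟩
    rw [List.map_pmap]
    exact (List.pmap_eq_map (f := id) _).trans (List.map_id l)
  have sub : {l : List ℕ | P l} ⊆ {l | l.length ≤ n ∧ ∀ x ∈ l, x ≤ n} := by
    intro l hl
    obtain ⟨hpos, hsum⟩ := h l hl
    exact ⟨hsum ▸ length_le_sum l hpos,
      fun x hx => hsum ▸ List.single_le_sum (fun y _ => Nat.zero_le y) x hx⟩
  exact (big.subset sub).to_subtype

-- ### cardinality helpers

lemma card_eq_one {P : List ℕ → Prop} (h : ∀ π, P π ↔ π = []) :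
    Nat.card {π : List ℕ // P π} = 1 := by
  haveI : Nonempty {π : List ℕ // P π} := ⟨⟨[], (h []).mpr rfl⟩⟩
  haveI : Subsingleton {π : List ℕ // P π} :=
    ⟨fun a b => Subtype.ext (((h _).mp a.2).trans ((h _).mp b.2).symm)⟩
  exact Nat.card_unique

lemma card_eq_zero {P : List ℕ → Prop} (h : ∀ π, ¬ P π) :
    Nat.card {π : List ℕ // P π} = 0 := by
  haveI : IsEmpty {π : List ℕ // P π} := ⟨fun x => h x.1 x.2⟩
  exact Nat.card_of_isEmpty

def consSplit {P Q1 Q2 : List ℕ → Prop} (M : ℕ)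
    (h1 : ∀ π, P π → π.headI = M → π ≠ [] ∧ Q1 π.tail)
    (h2 : ∀ t, Q1 t → P (M :: t))
    (h3 : ∀ π, P π → π.headI ≠ M → Q2 π)
    (h4 : ∀ π, Q2 π → P π ∧ π.headI ≠ M) :
    {π : List ℕ // P π} ≃ {t : List ℕ // Q1 t} ⊕ {π : List ℕ // Q2 π} where
  toFun x :=
    if h : x.1.headI = M then Sum.inl ⟨x.1.tail, (h1 x.1 x.2 h).2⟩
    else Sum.inr ⟨x.1, h3 x.1 x.2 h⟩
  invFun y :=
    match y with
    | Sum.inl t => ⟨M :: t.1, h2 t.1 t.2⟩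
    | Sum.inr p => ⟨p.1, (h4 p.1 p.2).1⟩
  left_inv := by
    rintro ⟨π, hπ⟩
    by_cases h : π.headI = M
    · have hne := (h1 π hπ h).1
      simp only [dif_pos h]
      cases π with
      | nil => exact absurd rfl hne
      | cons a t =>
        simp only [List.headI_cons] at h
        subst h
        rfl
    · simp only [dif_neg h]
  right_inv := by
    rintro (⟨t, ht⟩ | ⟨π, hπ⟩)
    · simp only [List.headI_cons, List.tail_cons, dif_pos]
      exact dif_pos rfl
    · have hne := (h4 π hπ).2
      simp only [dif_neg hne]

lemma card_split {P Q1 Q2 : List ℕ → Prop} (M : ℕ)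
    (h1 : ∀ π, P π → π.headI = M → π ≠ [] ∧ Q1 π.tail)
    (h2 : ∀ t, Q1 t → P (M :: t))
    (h3 : ∀ π, P π → π.headI ≠ M → Q2 π)
    (h4 : ∀ π, Q2 π → P π ∧ π.headI ≠ M)
    [Finite {t : List ℕ // Q1 t}] [Finite {π : List ℕ // Q2 π}] :
    Nat.card {π : List ℕ // P π} =
      Nat.card {t : List ℕ // Q1 t} + Nat.card {π : List ℕ // Q2 π} := by
  rw [Nat.card_congr (consSplit M h1 h2 h3 h4), Nat.card_sum]

-- ### the counting function

noncomputable def Fc (N k n : ℕ) : ℕ :=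
  if k ≤ n ∧ (n - k) % 2 = 0 then cf N k ((n - k) / 2) else 0

lemma F_zero (N n : ℕ) : Fc N 0 n = if n = 0 then 1 else 0 := by
  simp only [Fc, cf_zero]
  split_ifs <;> omega

lemma F_vanish (N k n : ℕ) (h : N < k) : Fc N k n = 0 := by
  simp only [Fc, cf_vanish N k _ h]
  split_ifs <;> rfl

lemma F_step_A (N k n : ℕ) (hk1 : 1 ≤ k) (hk : k ≤ N+1) (hn : 2*(N+1-k)+1 ≤ n) :
    Fc (N+1) k n = Fc N (k-1) (n - (2*(N+1-k)+1)) + Fc N k n := by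
  obtain ⟨k', rfl⟩ : ∃ k', k = k'+1 := ⟨k-1, by omega⟩
  simp only [Fc, Nat.add_sub_cancel]
  rw [cf_pascal2 N k' _ (by omega)]
  split_ifs <;>
    first
      | omega
      | (congr 1 <;> first | omega | (congr 1 <;> omega))
      | (rw [cf_vanish] <;> omega)

lemma F_skip_A (N k n : ℕ) (hk1 : 1 ≤ k) (hk : k ≤ N+1) (hn : n < 2*(N+1-k)+1) :
    Fc (N+1) k n = Fc N k n := by
  obtain ⟨k', rfl⟩ : ∃ k', k = k'+1 := ⟨k-1, by omega⟩
  simp only [Fc]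
  rw [cf_pascal2 N k' _ (by omega)]
  split_ifs <;>
    first
      | omega
      | (congr 1 <;> first | omega | (congr 1 <;> omega))
      | (rw [cf_self] ; split_ifs <;> omega)

lemma F_step_B (N k n : ℕ) (hk : k ≤ N+1) (hn : N+1 ≤ n) :
    Fc (N+1) k n = Fc N (N+1-k) (n - (N+1)) + Fc N k n := by
  match k with
  | 0 =>
    simp only [Fc, Nat.sub_zero, cf_zero, cf_vanish N (N+1) _ (by omega)]
    split_ifs <;> omega
  | k'+1 =>
    have e : N + 1 - (k'+1) = N - k' := by omega
    rw [e]
    simp only [Fc]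
    rw [cf_pascal2 N k' _ (by omega), cf_symm N k' _ (by omega)]
    split_ifs <;>
      first
        | omega
        | (congr 1 <;> first | omega | (congr 1 <;> omega))
        | (rw [cf_vanish] <;> omega)

lemma F_skip_B (N k n : ℕ) (hk : k ≤ N+1) (hn : n < N+1) :
    Fc (N+1) k n = Fc N k n := by
  match k with
  | 0 => rw [F_zero, F_zero]
  | k'+1 =>
    simp only [Fc]
    rw [cf_pascal2 N k' _ (by omega)]
    split_ifs <;>
      first
        | omega
        | (congr 1 <;> first | omega | (congr 1 <;> omega))
        | (rw [cf_self] ; split_ifs <;> omega)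

-- ### side A : partitions into k odd parts

def PA (N k n : ℕ) (π : List ℕ) : Prop :=
  IsPartition π ∧ π.length = k ∧
    (∀ p ∈ π, p % 2 = 1 ∧ (p : ℤ) ≤ 2 * (N : ℤ) - 2 * (k : ℤ) + 1) ∧ π.sum = n

lemma PA_finite (N k n : ℕ) : Finite {π : List ℕ // PA N k n π} :=
  finite_of_sum (n := n) (fun l hl => ⟨hl.1.2, hl.2.2.2⟩)

lemma PA_k0 (N n : ℕ) : Nat.card {π : List ℕ // PA N 0 n π} = Fc N 0 n := by
  rw [F_zero]
  by_cases hn : n = 0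
  · subst hn
    rw [if_pos rfl]
    apply card_eq_one
    intro π
    constructor
    · rintro ⟨_, hlen, _, _⟩; exact List.length_eq_zero_iff.mp hlen
    · rintro rfl
      exact ⟨⟨List.isChain_nil, by simp⟩, rfl, by simp, rfl⟩
  · rw [if_neg hn]
    apply card_eq_zero
    rintro π ⟨_, hlen, _, hsum⟩
    obtain rfl := List.length_eq_zero_iff.mp hlen
    simp at hsum
    exact hn hsum.symm

lemma PA_big (N k n : ℕ) (hk : N < k) : Nat.card {π : List ℕ // PA N k n π} = 0 := by
  apply card_eq_zero
  rintro π ⟨⟨_, hpos⟩, hlen, hb, _⟩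
  have hne : π ≠ [] := by
    intro h; subst h; simp at hlen; omega
  have hm := headI_mem hne
  have h1 := hpos _ hm
  have h2 := (hb _ hm).2
  omega

lemma PA_eq (N k n : ℕ) (hk1 : 1 ≤ k) (hk : k ≤ N+1) (hn : n < 2*(N+1-k)+1) :
    ∀ π, PA (N+1) k n π ↔ PA N k n π := by
  intro π
  constructor
  · rintro ⟨hp, hlen, hb, hsum⟩
    refine ⟨hp, hlen, fun p hp' => ⟨(hb p hp').1, ?_⟩, hsum⟩
    have h1 := (hb p hp').1
    have h2 := (hb p hp').2
    have h3 : p ≤ π.sum := List.single_le_sum (fun y _ => Nat.zero_le y) p hp'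
    rw [hsum] at h3
    omega
  · rintro ⟨hp, hlen, hb, hsum⟩
    refine ⟨hp, hlen, fun p hp' => ⟨(hb p hp').1, ?_⟩, hsum⟩
    have h2 := (hb p hp').2
    omega

lemma PA_h1 (N k n : ℕ) (hk1 : 1 ≤ k) (hk : k ≤ N+1) :
    ∀ π, PA (N+1) k n π → π.headI = 2*(N+1-k)+1 →
      π ≠ [] ∧ PA N (k-1) (n - (2*(N+1-k)+1)) π.tail := by
  rintro π ⟨⟨hch, hpos⟩, hlen, hb, hsum⟩ hhead
  have hne : π ≠ [] := by
    intro h; subst h; simp at hlen; omega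
  refine ⟨hne, ?_⟩
  obtain ⟨a, t, rfl⟩ := List.exists_cons_of_ne_nil hne
  simp only [List.headI_cons] at hhead
  simp only [List.tail_cons]
  have hpw := List.isChain_iff_pairwise.mp hch
  refine ⟨⟨List.isChain_iff_pairwise.mpr hpw.of_cons,
    fun p hp => hpos p (List.mem_cons_of_mem a hp)⟩, ?_, ?_, ?_⟩
  · simp only [List.length_cons] at hlen; omega
  · intro p hp
    have h1 := (hb p (List.mem_cons_of_mem a hp)).1
    have hle : p ≤ a := (List.pairwise_cons.mp hpw).1 p hp
    refine ⟨h1, ?_⟩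
    omega
  · simp only [List.sum_cons] at hsum
    omega

lemma PA_h2 (N k n : ℕ) (hk1 : 1 ≤ k) (hk : k ≤ N+1) (hn : 2*(N+1-k)+1 ≤ n) :
    ∀ t, PA N (k-1) (n - (2*(N+1-k)+1)) t → PA (N+1) k n ((2*(N+1-k)+1) :: t) := by
  rintro t ⟨⟨hch, hpos⟩, hlen, hb, hsum⟩
  have hpw := List.isChain_iff_pairwise.mp hch
  refine ⟨⟨List.isChain_iff_pairwise.mpr (List.pairwise_cons.mpr ⟨?_, hpw⟩),
    ?_⟩, ?_, ?_, ?_⟩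
  · intro p hp
    have h2 := (hb p hp).2
    omega
  · rintro p hp
    rcases List.mem_cons.mp hp with rfl | hp'
    · omega
    · exact hpos p hp'
  · simp only [List.length_cons]; omega
  · rintro p hp
    rcases List.mem_cons.mp hp with rfl | hp'
    · constructor
      · omega
      · push_cast; omega
    · have h1 := (hb p hp').1
      have h2 := (hb p hp').2
      exact ⟨h1, by omega⟩
  · simp only [List.sum_cons]; omega

lemma PA_h3 (N k n : ℕ) (hk1 : 1 ≤ k) (hk : k ≤ N+1) :
    ∀ π, PA (N+1) k n π → π.headI ≠ 2*(N+1-k)+1 → PA N k n π := by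
  rintro π ⟨⟨hch, hpos⟩, hlen, hb, hsum⟩ hhead
  have hne : π ≠ [] := by
    intro h; subst h; simp at hlen; omega
  obtain ⟨a, t, rfl⟩ := List.exists_cons_of_ne_nil hne
  simp only [List.headI_cons] at hhead
  have hpw := List.isChain_iff_pairwise.mp hch
  have hb1 := hb a (List.mem_cons_self)
  refine ⟨⟨hch, hpos⟩, hlen, ?_, hsum⟩
  intro p hp
  refine ⟨(hb p hp).1, ?_⟩
  have hle : p ≤ a := mem_le_headI hpw hp
  have h1 := (hb p hp).1
  have hb11 := hb1.1
  have hb12 := hb1.2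
  omega

lemma PA_h4 (N k n : ℕ) (hk1 : 1 ≤ k) (hk : k ≤ N+1) :
    ∀ π, PA N k n π → PA (N+1) k n π ∧ π.headI ≠ 2*(N+1-k)+1 := by
  rintro π ⟨⟨hch, hpos⟩, hlen, hb, hsum⟩
  have hne : π ≠ [] := by
    intro h; subst h; simp at hlen; omega
  obtain ⟨a, t, rfl⟩ := List.exists_cons_of_ne_nil hne
  have hb1 := hb a (List.mem_cons_self)
  constructor
  · refine ⟨⟨hch, hpos⟩, hlen, ?_, hsum⟩
    intro p hp
    have := (hb p hp).2
    exact ⟨(hb p hp).1, by omega⟩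
  · simp only [List.headI_cons]
    have := hb1.2
    omega

lemma LA : ∀ N k n : ℕ, Nat.card {π : List ℕ // PA N k n π} = Fc N k n := by
  intro N
  induction N with
  | zero =>
    intro k n
    match k with
    | 0 => exact PA_k0 0 n
    | k+1 => rw [PA_big 0 (k+1) n (by omega), F_vanish 0 (k+1) n (by omega)]
  | succ N ih =>
    intro k n
    match k with
    | 0 => exact PA_k0 (N+1) n
    | k+1 =>
      by_cases hbig : N+1 < k+1
      · rw [PA_big (N+1) (k+1) n hbig, F_vanish (N+1) (k+1) n hbig]
      · have hk : k+1 ≤ N+1 := by omega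
        by_cases hn : n < 2*(N+1-(k+1))+1
        · rw [Nat.card_congr (Equiv.subtypeEquivRight (PA_eq N (k+1) n (by omega) hk hn)),
            ih (k+1) n, F_skip_A N (k+1) n (by omega) hk hn]
        · push_neg at hn
          haveI := PA_finite N (k+1-1) (n - (2*(N+1-(k+1))+1))
          haveI := PA_finite N (k+1) n
          rw [card_split (2*(N+1-(k+1))+1)
            (PA_h1 N (k+1) n (by omega) hk)
            (PA_h2 N (k+1) n (by omega) hk hn)
            (PA_h3 N (k+1) n (by omega) hk)
            (PA_h4 N (k+1) n (by omega) hk),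
            ih, ih, ← F_step_A N (k+1) n (by omega) hk hn]

-- ### side B : distinct partitions with given alternating sum

def PB (N k n : ℕ) (π : List ℕ) : Prop :=
  IsDistinctPartition π ∧ (∀ p ∈ π, p ≤ N) ∧ π.sum = n ∧ altSum π = (k : ℤ)

lemma PB_finite (N k n : ℕ) : Finite {π : List ℕ // PB N k n π} :=
  finite_of_sum (n := n) (fun l hl => ⟨hl.1.2, hl.2.2.1⟩)

lemma PB_zero (k n : ℕ) : Nat.card {π : List ℕ // PB 0 k n π} = Fc 0 k n := by
  by_cases h : n = 0 ∧ k = 0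
  · obtain ⟨rfl, rfl⟩ := h
    have : Fc 0 0 0 = 1 := by simp [Fc, cf_zero]
    rw [this]
    apply card_eq_one
    intro π
    constructor
    · rintro ⟨⟨_, hpos⟩, hb, hsum, _⟩
      cases π with
      | nil => rfl
      | cons a t =>
        have h1 := hpos a (List.mem_cons_self)
        have h2 := hb a (List.mem_cons_self)
        omega
    · rintro rfl
      exact ⟨⟨List.isChain_nil, by simp⟩, by simp, rfl, rfl⟩
  · have hF : Fc 0 k n = 0 := by
      match k with
      | 0 => rw [F_zero]; split_ifs <;> omega
      | k+1 => exact F_vanish 0 (k+1) n (by omega)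
    rw [hF]
    apply card_eq_zero
    rintro π ⟨⟨_, hpos⟩, hb, hsum, hAS⟩
    have hnil : π = [] := by
      cases π with
      | nil => rfl
      | cons a t =>
        have h1 := hpos a (List.mem_cons_self)
        have h2 := hb a (List.mem_cons_self)
        omega
    subst hnil
    simp at hsum
    rw [altSum_nil] at hAS
    have : k = 0 := by omega
    exact h ⟨hsum.symm, this⟩

lemma PB_big (N k n : ℕ) (hk : N < k) : Nat.card {π : List ℕ // PB N k n π} = 0 := by
  apply card_eq_zero
  rintro π ⟨⟨hch, hpos⟩, hb, hsum, hAS⟩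
  have hpw := List.isChain_iff_pairwise.mp hch
  have hbd := altSum_nonneg_le_head π hpw
  cases π with
  | nil => rw [altSum_nil] at hAS; omega
  | cons a t =>
    have h2 := hb a (List.mem_cons_self)
    simp only [List.headI_cons] at hbd
    rw [hAS] at hbd
    omega

lemma PB_eq (N k n : ℕ) (hn : n < N+1) :
    ∀ π, PB (N+1) k n π ↔ PB N k n π := by
  intro π
  constructor
  · rintro ⟨hd, hb, hsum, hAS⟩
    refine ⟨hd, fun p hp => ?_, hsum, hAS⟩
    have h3 : p ≤ π.sum := List.single_le_sum (fun y _ => Nat.zero_le y) p hp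
    rw [hsum] at h3
    omega
  · rintro ⟨hd, hb, hsum, hAS⟩
    exact ⟨hd, fun p hp => le_trans (hb p hp) (by omega), hsum, hAS⟩

lemma PB_h1 (N k n : ℕ) (hk : k ≤ N+1) :
    ∀ π, PB (N+1) k n π → π.headI = N+1 →
      π ≠ [] ∧ PB N (N+1-k) (n - (N+1)) π.tail := by
  rintro π ⟨⟨hch, hpos⟩, hb, hsum, hAS⟩ hhead
  have hne : π ≠ [] := by
    intro h; subst h; simp at hhead
  refine ⟨hne, ?_⟩
  obtain ⟨a, t, rfl⟩ := List.exists_cons_of_ne_nil hne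
  simp only [List.headI_cons] at hhead
  simp only [List.tail_cons]
  have hpw := List.isChain_iff_pairwise.mp hch
  rw [altSum_cons] at hAS
  refine ⟨⟨List.isChain_iff_pairwise.mpr hpw.of_cons,
    fun p hp => hpos p (List.mem_cons_of_mem a hp)⟩, ?_, ?_, ?_⟩
  · intro p hp
    have := (List.pairwise_cons.mp hpw).1 p hp
    omega
  · simp only [List.sum_cons] at hsum
    omega
  · have : ((N+1-k : ℕ) : ℤ) = (N : ℤ) + 1 - (k : ℤ) := by push_cast [hk]; ring
    rw [this]
    omega

lemma PB_h2 (N k n : ℕ) (hk : k ≤ N+1) (hn : N+1 ≤ n) :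
    ∀ t, PB N (N+1-k) (n - (N+1)) t → PB (N+1) k n ((N+1) :: t) := by
  rintro t ⟨⟨hch, hpos⟩, hb, hsum, hAS⟩
  have hpw := List.isChain_iff_pairwise.mp hch
  have hcast : ((N+1-k : ℕ) : ℤ) = (N : ℤ) + 1 - (k : ℤ) := by push_cast [hk]; ring
  rw [hcast] at hAS
  refine ⟨⟨List.isChain_iff_pairwise.mpr (List.pairwise_cons.mpr
    ⟨fun p hp => by have := hb p hp; omega, hpw⟩), ?_⟩, ?_, ?_, ?_⟩
  · rintro p hp
    rcases List.mem_cons.mp hp with rfl | hp'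
    · omega
    · exact hpos p hp'
  · rintro p hp
    rcases List.mem_cons.mp hp with rfl | hp'
    · omega
    · exact le_trans (hb p hp') (by omega)
  · simp only [List.sum_cons]; omega
  · rw [altSum_cons, hAS]; push_cast; ring

lemma PB_h3 (N k n : ℕ) :
    ∀ π, PB (N+1) k n π → π.headI ≠ N+1 → PB N k n π := by
  rintro π ⟨⟨hch, hpos⟩, hb, hsum, hAS⟩ hhead
  refine ⟨⟨hch, hpos⟩, ?_, hsum, hAS⟩
  cases π with
  | nil => simp
  | cons a t =>
    simp only [List.headI_cons] at hhead
    have hpw := List.isChain_iff_pairwise.mp hch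
    have ha := hb a (List.mem_cons_self)
    intro p hp
    rcases List.mem_cons.mp hp with rfl | hp'
    · omega
    · have := (List.pairwise_cons.mp hpw).1 p hp'
      omega

lemma PB_h4 (N k n : ℕ) :
    ∀ π, PB N k n π → PB (N+1) k n π ∧ π.headI ≠ N+1 := by
  rintro π ⟨hd, hb, hsum, hAS⟩
  constructor
  · exact ⟨hd, fun p hp => le_trans (hb p hp) (by omega), hsum, hAS⟩
  · cases π with
    | nil => simp
    | cons a t =>
      simp only [List.headI_cons]
      have := hb a (List.mem_cons_self)
      omega

lemma LB : ∀ N k n : ℕ, Nat.card {π : List ℕ // PB N k n π} = Fc N k n := by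
  intro N
  induction N with
  | zero => exact PB_zero
  | succ N ih =>
    intro k n
    by_cases hbig : N+1 < k
    · rw [PB_big (N+1) k n hbig, F_vanish (N+1) k n hbig]
    · have hk : k ≤ N+1 := by omega
      by_cases hn : n < N+1
      · rw [Nat.card_congr (Equiv.subtypeEquivRight (PB_eq N k n hn)),
          ih k n, F_skip_B N k n hk hn]
      · push_neg at hn
        haveI := PB_finite N (N+1-k) (n - (N+1))
        haveI := PB_finite N k n
        rw [card_split (N+1)
          (PB_h1 N k n hk)
          (PB_h2 N k n hk hn)
          (PB_h3 N k n)
          (PB_h4 N k n),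
          ih, ih, ← F_step_B N k n hk hn]


theorem stmt14 (N n k : ℕ) :
    Nat.card {π : List ℕ // IsPartition π ∧ π.length = k ∧
      (∀ p ∈ π, p % 2 = 1 ∧ (p : ℤ) ≤ 2 * (N : ℤ) - 2 * (k : ℤ) + 1) ∧ π.sum = n} =
    Nat.card {π : List ℕ // IsDistinctPartition π ∧ (∀ p ∈ π, p ≤ N) ∧
      π.sum = n ∧ altSum π = (k : ℤ)} :=
  (LA N k n).trans (LB N k n).symm
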